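/- (Weak convergence of oscillating periodic functions.) Let f : ℝ³ → ℝ be a 𝒢-periodic locally integrable function, and for each natural number n define fₙ(x) = f(n x). Then for every continuous compactly supported function g : ℝ³ → ℝ one has ∫_{ℝ³} fₙ(x) g(x) dx → ( ⨍_Y f(y) dy ) ∫_{ℝ³} g(x) dx as n → ∞. -/

import Mathlib

open MeasureTheory

noncomputable section

/-- Classical partial derivative of `f` in the `j`-th coordinate direction. -/
def pd (j : Fin 3) (f : (Fin 3 → ℝ) → ℝ) (x : Fin 3 → ℝ) : ℝ :=
  fderiv ℝ f x (Pi.single j 1)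

/-- Symmetric part of the gradient of a vector field. -/
def symGrad (v : (Fin 3 → ℝ) → (Fin 3 → ℝ)) (x : Fin 3 → ℝ) :
    Matrix (Fin 3) (Fin 3) ℝ :=
  Matrix.of fun i j => (pd j (fun y => v y i) x + pd i (fun y => v y j) x) / 2

/-- Divergence of a matrix field: `(div μ)_i = Σ_j ∂_j μ_ij`. -/
def matDiv (μ : (Fin 3 → ℝ) → Matrix (Fin 3) (Fin 3) ℝ) (x : Fin 3 → ℝ) : Fin 3 → ℝ :=
  fun i => ∑ j, pd j (fun y => μ y i j) x

/-- Frobenius inner product of 3×3 matrices. -/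
def frob (a b : Matrix (Fin 3) (Fin 3) ℝ) : ℝ := ∑ i, ∑ j, a i j * b i j

/-- Levi-Civita symbol on `{1,2,3}`. -/
def levi (i j k : Fin 3) : ℝ :=
  Matrix.det (Matrix.of ![(Pi.single i 1 : Fin 3 → ℝ), Pi.single j 1, Pi.single k 1])

/-- `(CURL e)_ij = Σ_{l,k} ε_ilk ∂_l e_jk`. -/
def curlM (e : (Fin 3 → ℝ) → Matrix (Fin 3) (Fin 3) ℝ) (x : Fin 3 → ℝ) :
    Matrix (Fin 3) (Fin 3) ℝ :=
  Matrix.of fun i j => ∑ l, ∑ k, levi i l k * pd l (fun y => e y j k) x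

/-- Divergence of a vector field. -/
def divV (u : (Fin 3 → ℝ) → (Fin 3 → ℝ)) (x : Fin 3 → ℝ) : ℝ :=
  ∑ i, pd i (fun y => u y i) x

/-- Curl of a vector field. -/
def curlV (u : (Fin 3 → ℝ) → (Fin 3 → ℝ)) (x : Fin 3 → ℝ) : Fin 3 → ℝ :=
  fun i => ∑ j, ∑ k, levi i j k * pd j (fun y => u y k) x

/-- `𝒢`-periodicity with respect to the lattice generated by `gv 0, gv 1, gv 2`. -/
def GPeriodic {α : Type*} (gv : Fin 3 → (Fin 3 → ℝ)) (f : (Fin 3 → ℝ) → α) : Prop :=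
  ∀ x : Fin 3 → ℝ, ∀ i : Fin 3, f (x + gv i) = f x

/-- The periodicity cell `Y = {s₁g₁+s₂g₂+s₃g₃ : sᵢ ∈ [0,1]}`. -/
def cell (gv : Fin 3 → (Fin 3 → ℝ)) : Set (Fin 3 → ℝ) :=
  (fun s : Fin 3 → ℝ => ∑ i, s i • gv i) '' Set.Icc 0 1


section AuxOsc
open scoped ENNReal Pointwise
open MeasureTheory Metric Bornology Submodule Module

theorem aux_periodic (gv : Fin 3 → (Fin 3 → ℝ)) (f : (Fin 3 → ℝ) → ℝ)
    (hfper : GPeriodic gv f) :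
    ∀ γ ∈ span ℤ (Set.range gv), ∀ x, f (γ + x) = f x := by
  intro γ hγ
  rw [← SetLike.mem_coe, ← Submodule.coe_toAddSubgroup, span_int_eq_addSubgroupClosure] at hγ
  induction hγ using AddSubgroup.closure_induction with
  | mem γ hγ =>
    obtain ⟨i, rfl⟩ := hγ
    intro x; rw [add_comm]; exact hfper x i
  | zero => simp
  | add γ δ _ _ hγ hδ => intro x; rw [add_assoc, hγ, hδ]
  | neg γ _ hγ => intro x; have h := hγ (-γ + x); rw [add_neg_cancel_left] at h; exact h.symm

theorem aux_count (b : Basis (Fin 3) ℝ (Fin 3 → ℝ)) (W : Set (Fin 3 → ℝ))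
    (T : Finset (span ℤ (Set.range ⇑b)).toAddSubgroup)
    (hT : ∀ γ ∈ T, (γ : Fin 3 → ℝ) +ᵥ ZSpan.fundamentalDomain b ⊆ W) :
    (T.card : ℝ≥0∞) * volume (ZSpan.fundamentalDomain b) ≤ volume W := by
  have hfd := ZSpan.isAddFundamentalDomain' b (volume : Measure (Fin 3 → ℝ))
  have hDmeas : MeasurableSet (ZSpan.fundamentalDomain b) := ZSpan.fundamentalDomain_measurableSet b
  have hdisj : (↑T : Set _).Pairwise
      (Function.onFun (AEDisjoint volume) (fun γ : (span ℤ (Set.range ⇑b)).toAddSubgroup =>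
        (γ : Fin 3 → ℝ) +ᵥ ZSpan.fundamentalDomain b)) := by
    intro x _ y _ hxy
    exact hfd.aedisjoint hxy
  calc (T.card : ℝ≥0∞) * volume (ZSpan.fundamentalDomain b)
      = ∑ γ ∈ T, volume ((γ : Fin 3 → ℝ) +ᵥ ZSpan.fundamentalDomain b) := by
        simp [measure_vadd, Finset.sum_const, nsmul_eq_mul]
    _ = volume (⋃ γ ∈ T, (γ : Fin 3 → ℝ) +ᵥ ZSpan.fundamentalDomain b) :=
        (measure_biUnion_finset₀ hdisj
          (fun γ _ => (hDmeas.const_vadd _).nullMeasurableSet)).symm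
    _ ≤ volume W := measure_mono (Set.iUnion₂_subset hT)

end AuxOsc

open scoped ENNReal Pointwise in
open Metric Bornology Submodule Module in
open Filter Topology in
set_option maxHeartbeats 2000000 in
/-- **Weak convergence of oscillating periodic functions**: if `f` is `𝒢`-periodic and
locally integrable and `fₙ(x) = f(nx)`, then `∫ fₙ g → (⨍_Y f) ∫ g` for every continuous
compactly supported `g`. -/
theorem oscillating_weak_convergence (gv : Fin 3 → (Fin 3 → ℝ))
    (hgv : LinearIndependent ℝ gv)
    (f : (Fin 3 → ℝ) → ℝ) (hfint : LocallyIntegrable f) (hfper : GPeriodic gv f) :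
    ∀ g : (Fin 3 → ℝ) → ℝ, Continuous g → HasCompactSupport g →
      Tendsto (fun n : ℕ => ∫ x, f ((n : ℝ) • x) * g x) atTop
        (𝓝 ((⨍ y in cell gv, f y) * ∫ x, g x)) := by
  intro g hgc hgs
  classical
  set b : Basis (Fin 3) ℝ (Fin 3 → ℝ) :=
    basisOfLinearIndependentOfCardEqFinrank hgv (by simp) with hbdef
  haveI : Countable ((span ℤ (Set.range ⇑b)).toAddSubgroup) :=
    inferInstanceAs (Countable (span ℤ (Set.range ⇑b)))
  have hb : ⇑b = gv := coe_basisOfLinearIndependentOfCardEqFinrank _ _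
  set D := ZSpan.fundamentalDomain b with hDdef
  have hfd : IsAddFundamentalDomain (span ℤ (Set.range ⇑b)).toAddSubgroup D volume :=
    ZSpan.isAddFundamentalDomain' b volume
  have hDmeas : MeasurableSet D := ZSpan.fundamentalDomain_measurableSet b
  have hDbdd : IsBounded D := ZSpan.fundamentalDomain_isBounded b
  have hDcc : IsCompact (closure D) :=
    Metric.isCompact_of_isClosed_isBounded isClosed_closure hDbdd.closure
  have hvol0 : volume D ≠ 0 := ZSpan.measure_fundamentalDomain_ne_zero b
  have hvolT : volume D ≠ ⊤ :=
    ((measure_mono subset_closure).trans_lt hDcc.measure_lt_top).ne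
  set vD := (volume D).toReal with hvDdef
  have hvD0 : 0 < vD := ENNReal.toReal_pos hvol0 hvolT
  have hfD : IntegrableOn f D :=
    (hfint.integrableOn_isCompact hDcc).mono_set subset_closure
  -- rewrite the target average
  have havg : (⨍ y in cell gv, f y) = (∫ y in D, f y) / vD := by
    have hae : D =ᵐ[volume] cell gv := by
      have : cell gv = parallelepiped ⇑b := by rw [hb]; rfl
      rw [this]; exact ZSpan.fundamentalDomain_ae_parallelepiped b volume
    rw [setAverage_eq, ← setIntegral_congr_set hae, ← measureReal_congr hae]
    rw [smul_eq_mul, div_eq_inv_mul, hvDdef]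
    rfl
  rw [havg]
  -- constants
  have hgu : UniformContinuous g := hgs.uniformContinuous_of_continuous hgc
  obtain ⟨RD', hRD'⟩ := hDbdd.subset_closedBall 0
  set RD := max RD' 1 with hRDdef
  have hRDb : D ⊆ closedBall 0 RD :=
    hRD'.trans (closedBall_subset_closedBall (le_max_left _ _))
  have hRD1 : (1:ℝ) ≤ RD := le_max_right _ _
  have hRD0 : (0:ℝ) < RD := lt_of_lt_of_le one_pos hRD1
  obtain ⟨RK', hRK'⟩ := hgs.isBounded.subset_closedBall 0
  set RK := max RK' 1 with hRKdef
  have hKb : tsupport g ⊆ closedBall 0 RK :=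
    hRK'.trans (closedBall_subset_closedBall (le_max_left _ _))
  have hRK0 : (0:ℝ) < RK := lt_of_lt_of_le one_pos (le_max_right _ _)
  set vB := (volume (ball (0:Fin 3 → ℝ) 1)).toReal with hvBdef
  have hvB0 : (0:ℝ) ≤ vB := ENNReal.toReal_nonneg
  set Creal := (RK + 3*RD)^3 * vB / vD with hCrealdef
  have hCreal0 : (0:ℝ) ≤ Creal := by positivity
  obtain ⟨Cg, hCg⟩ : ∃ C, ∀ x, ‖g x‖ ≤ C := hgs.exists_bound_of_continuous hgc
  have hCg0 : (0:ℝ) ≤ Cg := le_trans (norm_nonneg _) (hCg 0)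
  set Mf := ∫ y in D, |f y| with hMfdef
  have hMf0 : (0:ℝ) ≤ Mf := integral_nonneg (fun y => abs_nonneg _)
  rw [Metric.tendsto_atTop]
  intro ε hε
  set ε' := ε / (2 * (Creal + 1) * (Mf + 1)) with hε'def
  have hε'0 : 0 < ε' := by positivity
  obtain ⟨δ, hδ0, hδ⟩ := Metric.uniformContinuous_iff.1 hgu ε' hε'0
  obtain ⟨N0, hN0⟩ := exists_nat_gt (2 * RD / δ)
  refine ⟨max N0 1, fun n hn => ?_⟩
  have hn1 : 1 ≤ n := le_trans (le_max_right _ _) hn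
  have hnN0 : N0 ≤ n := le_trans (le_max_left _ _) hn
  have hnδ : 2 * RD < n * δ := by
    have h1 : 2 * RD / δ < (n:ℝ) := lt_of_lt_of_le hN0 (by exact_mod_cast hnN0)
    calc 2 * RD = (2 * RD / δ) * δ := by field_simp
    _ < n * δ := by exact mul_lt_mul_of_pos_right h1 hδ0
  -- the key estimate
  have key : |(∫ x, f ((n:ℝ) • x) * g x) - (∫ y in D, f y) / vD * ∫ x, g x|
      ≤ Mf * (Creal * ε') := by
    have hnn0 : (0:ℝ) < (n:ℝ) := by exact_mod_cast Nat.lt_of_lt_of_le Nat.zero_lt_one hn1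
    set nn := (n:ℝ) with hnndef
    have hnn1 : (1:ℝ) ≤ nn := by rw [hnndef]; exact_mod_cast hn1
    have hn3 : (0:ℝ) < nn^3 := by positivity
    set gn : (Fin 3 → ℝ) → ℝ := fun z => g ((nn)⁻¹ • z) with hgndef
    have hgnc : Continuous gn := hgc.comp (continuous_const_smul _)
    have hgns : HasCompactSupport gn := hgs.comp_smul (inv_ne_zero hnn0.ne')
    have hfr3 : finrank ℝ (Fin 3 → ℝ) = 3 := by simp
    have hFint : Integrable (fun z => f z * gn z) := by
      have := hfint.integrable_smul_left_of_hasCompactSupport hgnc hgns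
      simpa [smul_eq_mul, mul_comm] using this
    have hstepA : (∫ x, f (nn • x) * g x) = (nn^3)⁻¹ * ∫ z, f z * gn z := by
      have h1 : (fun x => f (nn • x) * g x) = fun x => (fun z => f z * gn z) (nn • x) := by
        funext x
        simp only [hgndef, smul_smul, inv_mul_cancel₀ hnn0.ne', one_smul]
      rw [h1, Measure.integral_comp_smul volume (fun z => f z * gn z) nn, hfr3, smul_eq_mul,
        abs_of_nonneg (by positivity)]
    set r := nn * (RK + 2*RD) with hrdef
    have hvanish : ∀ γ : (span ℤ (Set.range ⇑b)).toAddSubgroup,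
        (γ : Fin 3 → ℝ) ∉ closedBall 0 r → ∀ y ∈ D, gn ((γ : Fin 3 → ℝ) + y) = 0 := by
      intro γ hγ y hy
      by_contra hne
      apply hγ
      have hmem : (nn)⁻¹ • ((γ : Fin 3 → ℝ) + y) ∈ tsupport g :=
        subset_tsupport g (by simpa [hgndef] using hne)
      have h1 : ‖(nn)⁻¹ • ((γ : Fin 3 → ℝ) + y)‖ ≤ RK := mem_closedBall_zero_iff.1 (hKb hmem)
      rw [norm_smul, Real.norm_eq_abs, abs_of_pos (inv_pos.2 hnn0)] at h1
      have h2 : ‖(γ : Fin 3 → ℝ) + y‖ ≤ nn * RK := by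
        rw [inv_mul_le_iff₀ hnn0] at h1
        linarith [h1]
      have h3 : ‖y‖ ≤ RD := mem_closedBall_zero_iff.1 (hRDb hy)
      have h4 : ‖(γ : Fin 3 → ℝ)‖ ≤ nn * RK + RD := by
        calc ‖(γ : Fin 3 → ℝ)‖ = ‖((γ : Fin 3 → ℝ) + y) - y‖ := by ring_nf
        _ ≤ ‖(γ : Fin 3 → ℝ) + y‖ + ‖y‖ := norm_sub_le _ _
        _ ≤ nn * RK + RD := by linarith
      rw [mem_closedBall_zero_iff, hrdef]
      nlinarith
    have hTfin : {γ : (span ℤ (Set.range ⇑b)).toAddSubgroup |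
        (γ : Fin 3 → ℝ) ∈ closedBall 0 r}.Finite := by
      have hdisc : DiscreteTopology
          (((span ℤ (Set.range ⇑b)).toAddSubgroup : Set (Fin 3 → ℝ))) :=
        (inferInstance : DiscreteTopology (span ℤ (Set.range ⇑b)))
      have hcl : IsClosed ((span ℤ (Set.range ⇑b)).toAddSubgroup : Set (Fin 3 → ℝ)) :=
        AddSubgroup.isClosed_of_discrete
      have hfin := Metric.finite_isBounded_inter_isClosed
        (K := closedBall (0 : Fin 3 → ℝ) r) DiscreteTopology.isDiscrete isBounded_closedBall hcl
      have hpre := hfin.preimage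
        (f := fun γ : (span ℤ (Set.range ⇑b)).toAddSubgroup => (γ : Fin 3 → ℝ))
        (Subtype.coe_injective.injOn)
      exact hpre.subset (fun γ hγ => ⟨hγ, γ.2⟩)
    set T := hTfin.toFinset with hTdef
    have hmemT : ∀ γ, γ ∈ T ↔ (γ : Fin 3 → ℝ) ∈ closedBall (0 : Fin 3 → ℝ) r :=
      fun γ => hTfin.mem_toFinset
    set H : (Fin 3 → ℝ) → ℝ := fun y => ∑ γ ∈ T, gn ((γ : Fin 3 → ℝ) + y) with hHdef
    have hgγc : ∀ γ : (span ℤ (Set.range ⇑b)).toAddSubgroup,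
        Continuous (fun y => gn ((γ : Fin 3 → ℝ) + y)) :=
      fun γ => hgnc.comp (continuous_const.add continuous_id)
    have hHcont : Continuous H := continuous_finset_sum _ (fun γ _ => hgγc γ)
    have hper : ∀ γ : (span ℤ (Set.range ⇑b)).toAddSubgroup, ∀ y,
        f ((γ : Fin 3 → ℝ) + y) = f y := by
      intro γ y
      refine aux_periodic gv f hfper _ ?_ y
      rw [← hb]
      exact γ.2
    have h1 : ∫ z, f z * gn z = ∑' γ : (span ℤ (Set.range ⇑b)).toAddSubgroup,
        ∫ y in D, f ((γ : Fin 3 → ℝ) + y) * gn ((γ : Fin 3 → ℝ) + y) :=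
      hfd.integral_eq_tsum'' _ hFint
    have h2 : ∀ γ : (span ℤ (Set.range ⇑b)).toAddSubgroup, γ ∉ T →
        (∫ y in D, f ((γ : Fin 3 → ℝ) + y) * gn ((γ : Fin 3 → ℝ) + y)) = 0 := by
      intro γ hγ
      have hγ2 : (γ : Fin 3 → ℝ) ∉ closedBall 0 r := fun h => hγ ((hmemT γ).2 h)
      rw [setIntegral_congr_fun hDmeas (g := fun _ => (0:ℝ))
        (fun y hy => by simp [hvanish γ hγ2 y hy]), integral_zero]
    have hterm_int : ∀ γ : (span ℤ (Set.range ⇑b)).toAddSubgroup,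
        IntegrableOn (fun y => f y * gn ((γ : Fin 3 → ℝ) + y)) D := by
      intro γ
      have := hfD.bdd_mul ((hgγc γ).aestronglyMeasurable) (ae_of_all _ (fun y => hCg _))
      simpa [mul_comm, IntegrableOn] using this
    have h4 : ∫ z, f z * gn z = ∫ y in D, f y * H y := by
      rw [h1, tsum_eq_sum h2]
      have e0 : ∀ γ ∈ T, (∫ y in D, f ((γ : Fin 3 → ℝ) + y) * gn ((γ : Fin 3 → ℝ) + y))
          = ∫ y in D, f y * gn ((γ : Fin 3 → ℝ) + y) := fun γ _ =>
        setIntegral_congr_fun hDmeas (fun y hy => by rw [hper])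
      rw [Finset.sum_congr rfl e0, ← integral_finset_sum T (fun γ _ => hterm_int γ)]
      refine setIntegral_congr_fun hDmeas (fun y hy => ?_)
      simp [hHdef, Finset.mul_sum]
    have hgnint : Integrable gn := hgnc.integrable_of_hasCompactSupport hgns
    have hgnD_int : ∀ γ : (span ℤ (Set.range ⇑b)).toAddSubgroup,
        IntegrableOn (fun y => gn ((γ : Fin 3 → ℝ) + y)) D := fun γ =>
      ((hgγc γ).locallyIntegrable.integrableOn_isCompact hDcc).mono_set subset_closure
    have h5 : ∫ z, gn z = ∑' γ : (span ℤ (Set.range ⇑b)).toAddSubgroup,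
        ∫ y in D, gn ((γ : Fin 3 → ℝ) + y) :=
      hfd.integral_eq_tsum'' _ hgnint
    have h6 : ∀ γ : (span ℤ (Set.range ⇑b)).toAddSubgroup, γ ∉ T →
        (∫ y in D, gn ((γ : Fin 3 → ℝ) + y)) = 0 := by
      intro γ hγ
      have hγ2 : (γ : Fin 3 → ℝ) ∉ closedBall 0 r := fun h => hγ ((hmemT γ).2 h)
      rw [setIntegral_congr_fun hDmeas (g := fun _ => (0:ℝ))
        (fun y hy => by simp [hvanish γ hγ2 y hy]), integral_zero]
    have h7 : ∫ y in D, H y = nn^3 * ∫ x, g x := by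
      have e1 : ∫ y in D, H y = ∑ γ ∈ T, ∫ y in D, gn ((γ : Fin 3 → ℝ) + y) := by
        simp only [hHdef]
        exact integral_finset_sum T (fun γ _ => hgnD_int γ)
      rw [e1, ← tsum_eq_sum (L := SummationFilter.unconditional _) h6, ← h5]
      have e2 := Measure.integral_comp_inv_smul volume g nn
      rw [hfr3] at e2
      simp only [hgndef]
      rw [e2, smul_eq_mul, abs_of_nonneg (by positivity)]
    have hcard : (T.card : ℝ) ≤ nn^3 * Creal := by
      have hsub : ∀ γ ∈ T, (γ : Fin 3 → ℝ) +ᵥ D ⊆ closedBall 0 (nn*(RK+3*RD)) := by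
        intro γ hγ z hz
        obtain ⟨y, hy, rfl⟩ := hz
        rw [mem_closedBall_zero_iff]
        have h1' : ‖(γ : Fin 3 → ℝ)‖ ≤ r := mem_closedBall_zero_iff.1 ((hmemT γ).1 hγ)
        have h2' : ‖y‖ ≤ RD := mem_closedBall_zero_iff.1 (hRDb hy)
        have h3' : ‖(γ : Fin 3 → ℝ) +ᵥ y‖ ≤ ‖(γ : Fin 3 → ℝ)‖ + ‖y‖ := norm_add_le _ _
        have h4' : RD ≤ nn * RD := le_mul_of_one_le_left hRD0.le hnn1
        rw [hrdef] at h1'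
        calc ‖(γ : Fin 3 → ℝ) +ᵥ y‖ ≤ ‖(γ : Fin 3 → ℝ)‖ + ‖y‖ := h3'
        _ ≤ nn * (RK + 2*RD) + RD := by linarith
        _ ≤ nn * (RK + 3*RD) := by nlinarith
      have hcount := aux_count b _ T hsub
      have hW : volume (closedBall (0:Fin 3 → ℝ) (nn*(RK+3*RD))) =
          ENNReal.ofReal ((nn*(RK+3*RD)) ^ 3) * volume (ball (0:Fin 3 → ℝ) 1) := by
        rw [Measure.addHaar_closedBall volume _ (by positivity), hfr3]
      rw [hW] at hcount
      have hWT : ENNReal.ofReal ((nn*(RK+3*RD)) ^ 3) * volume (ball (0:Fin 3 → ℝ) 1) ≠ ⊤ :=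
        ENNReal.mul_ne_top ENNReal.ofReal_ne_top measure_ball_lt_top.ne
      have hreal := ENNReal.toReal_mono hWT hcount
      rw [ENNReal.toReal_mul, ENNReal.toReal_mul, ENNReal.toReal_natCast,
        ENNReal.toReal_ofReal (by positivity)] at hreal
      rw [hCrealdef]
      rw [show nn^3 * ((RK + 3*RD)^3 * vB / vD) = (nn*(RK+3*RD))^3 * vB / vD by ring]
      rw [le_div_iff₀ hvD0]
      exact hreal
    have hosc : ∀ y ∈ D, ∀ y' ∈ D, |H y - H y'| ≤ T.card * ε' := by
      intro y hy y' hy'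
      have e1 : |H y - H y'| ≤ ∑ γ ∈ T, |gn ((γ : Fin 3 → ℝ)+y) - gn ((γ : Fin 3 → ℝ)+y')| := by
        rw [hHdef, ← Finset.sum_sub_distrib]
        exact Finset.abs_sum_le_sum_abs _ _
      refine e1.trans ?_
      have e2 : ∀ γ ∈ T, |gn ((γ : Fin 3 → ℝ)+y) - gn ((γ : Fin 3 → ℝ)+y')| ≤ ε' := by
        intro γ _
        have hyD : ‖y‖ ≤ RD := mem_closedBall_zero_iff.1 (hRDb hy)
        have hy'D : ‖y'‖ ≤ RD := mem_closedBall_zero_iff.1 (hRDb hy')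
        have hd : dist ((nn)⁻¹ • ((γ : Fin 3 → ℝ)+y)) ((nn)⁻¹ • ((γ : Fin 3 → ℝ)+y')) < δ := by
          rw [dist_eq_norm, ← smul_sub, add_sub_add_left_eq_sub, norm_smul,
            Real.norm_eq_abs, abs_of_pos (inv_pos.2 hnn0)]
          have h2 : ‖y - y'‖ ≤ 2 * RD := by
            calc ‖y-y'‖ ≤ ‖y‖+‖y'‖ := norm_sub_le _ _
            _ ≤ 2*RD := by linarith
          calc (nn)⁻¹ * ‖y-y'‖ ≤ (nn)⁻¹ * (2*RD) :=
            mul_le_mul_of_nonneg_left h2 (by positivity)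
          _ < δ := by
            rw [inv_mul_lt_iff₀ hnn0]
            nlinarith [hnδ]
        have e3 := hδ hd
        rw [Real.dist_eq] at e3
        exact e3.le
      calc ∑ γ ∈ T, |gn ((γ : Fin 3 → ℝ)+y) - gn ((γ : Fin 3 → ℝ)+y')| ≤ ∑ _γ ∈ T, ε' :=
        Finset.sum_le_sum e2
      _ = T.card * ε' := by rw [Finset.sum_const, nsmul_eq_mul]
    have hHD_int : IntegrableOn H D :=
      (hHcont.locallyIntegrable.integrableOn_isCompact hDcc).mono_set subset_closure
    set c' : ℝ := nn^3 * (∫ x, g x) / vD with hc'def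
    have hpt : ∀ y ∈ D, |H y - c'| ≤ T.card * ε' := by
      intro y hy
      have e1 : ∫ y' in D, (H y - H y') = H y * vD - nn^3 * ∫ x, g x := by
        rw [integral_sub (μ := volume.restrict D) (f := fun _ => H y) (g := H) (show IntegrableOn (fun _ => H y) D volume from integrableOn_const hvolT).integrable hHD_int.integrable,
          setIntegral_const, h7, smul_eq_mul, mul_comm]
        rfl
      have e2 : ‖∫ y' in D, (H y - H y')‖ ≤ (T.card * ε') * vD :=
        norm_setIntegral_le_of_norm_le_const hvolT.lt_top
          (fun y' hy' => by rw [Real.norm_eq_abs]; exact hosc y hy y' hy')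
      have e3 : H y - c' = (∫ y' in D, (H y - H y')) / vD := by
        rw [e1, hc'def]
        field_simp
      rw [e3, abs_div, abs_of_pos hvD0, div_le_iff₀ hvD0]
      rw [Real.norm_eq_abs] at e2
      exact e2
    set q : (Fin 3 → ℝ) → ℝ := fun y => (nn^3)⁻¹ * H y - (∫ x, g x) / vD with hqdef
    have hqcont : Continuous q := (continuous_const.mul hHcont).sub continuous_const
    have hqb : ∀ y ∈ D, |q y| ≤ Creal * ε' := by
      intro y hy
      have e1 : q y = (nn^3)⁻¹ * (H y - c') := by
        rw [hqdef, hc'def]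
        field_simp
      rw [e1, abs_mul, abs_of_pos (inv_pos.2 hn3)]
      calc (nn^3)⁻¹ * |H y - c'| ≤ (nn^3)⁻¹ * ((T.card : ℝ) * ε') :=
        mul_le_mul_of_nonneg_left (hpt y hy) (by positivity)
      _ ≤ (nn^3)⁻¹ * (nn^3 * Creal * ε') := by
          refine mul_le_mul_of_nonneg_left ?_ (by positivity)
          exact mul_le_mul_of_nonneg_right hcard hε'0.le
      _ = Creal * ε' := by
          field_simp
    have hHb : ∀ y, ‖H y‖ ≤ (T.card : ℝ) * Cg := by
      intro y
      rw [Real.norm_eq_abs, hHdef]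
      calc |∑ γ ∈ T, gn ((γ : Fin 3 → ℝ) + y)| ≤ ∑ γ ∈ T, |gn ((γ : Fin 3 → ℝ) + y)| :=
        Finset.abs_sum_le_sum_abs _ _
      _ ≤ ∑ _γ ∈ T, Cg := Finset.sum_le_sum (fun γ _ => hCg _)
      _ = T.card * Cg := by rw [Finset.sum_const, nsmul_eq_mul]
    have hqglobal : ∀ y, ‖q y‖ ≤ (nn^3)⁻¹ * ((T.card : ℝ) * Cg) + |∫ x, g x| / vD := by
      intro y
      rw [hqdef, Real.norm_eq_abs]
      calc |(nn^3)⁻¹ * H y - (∫ x, g x) / vD| ≤ |(nn^3)⁻¹ * H y| + |(∫ x, g x) / vD| :=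
        abs_sub _ _
      _ ≤ (nn^3)⁻¹ * ((T.card : ℝ) * Cg) + |∫ x, g x| / vD := by
          rw [abs_mul, abs_of_pos (inv_pos.2 hn3), abs_div, abs_of_pos hvD0]
          have := hHb y
          rw [Real.norm_eq_abs] at this
          have e := mul_le_mul_of_nonneg_left this (inv_pos.2 hn3).le
          linarith
    have hfq_int : IntegrableOn (fun y => f y * q y) D := by
      have := hfD.bdd_mul hqcont.aestronglyMeasurable
        (ae_of_all _ hqglobal)
      simpa [mul_comm, IntegrableOn] using this
    have hfH_int : IntegrableOn (fun y => f y * H y) D := by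
      have := hfD.bdd_mul hHcont.aestronglyMeasurable (ae_of_all _ hHb)
      simpa [mul_comm, IntegrableOn] using this
    have hsplit : (∫ x, f ((n:ℝ) • x) * g x) - (∫ y in D, f y)/vD * (∫ x, g x)
        = ∫ y in D, f y * q y := by
      rw [show ((n:ℝ)) = nn from rfl, hstepA, h4]
      have e1 : (nn^3)⁻¹ * ∫ y in D, f y * H y = ∫ y in D, (nn^3)⁻¹ * (f y * H y) :=
        (integral_const_mul _ _).symm
      have e2 : (∫ y in D, f y)/vD * (∫ x, g x) = ∫ y in D, f y * ((∫ x, g x)/vD) := by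
        rw [integral_mul_const]
        ring
      rw [e1, e2, ← integral_sub (hfH_int.const_mul _) (hfD.mul_const _)]
      refine setIntegral_congr_fun hDmeas (fun y hy => ?_)
      rw [hqdef]
      ring
    rw [hsplit]
    have hfin1 : |(∫ y in D, f y * q y)| ≤ ∫ y in D, |f y * q y| := by
      have h := norm_integral_le_integral_norm (μ := volume.restrict D) (fun y => f y * q y)
      simpa only [Real.norm_eq_abs] using h
    have hfin2 : (∫ y in D, |f y * q y|) ≤ ∫ y in D, |f y| * (Creal * ε') := by
      refine setIntegral_mono_on hfq_int.abs ((hfD.abs).mul_const _) hDmeas ?_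
      intro y hy
      rw [abs_mul]
      exact mul_le_mul_of_nonneg_left (hqb y hy) (abs_nonneg _)
    have hfin3 : (∫ y in D, |f y| * (Creal * ε')) = Mf * (Creal * ε') := by
      rw [integral_mul_const]
    exact hfin1.trans (hfin2.trans (le_of_eq hfin3))
  rw [Real.dist_eq]
  refine lt_of_le_of_lt key ?_
  have h1 : Mf * (Creal * ε') ≤ (Mf + 1) * ((Creal + 1) * ε') := by nlinarith
  refine lt_of_le_of_lt h1 ?_
  rw [hε'def]
  rw [show (Mf + 1) * ((Creal + 1) * (ε / (2 * (Creal + 1) * (Mf + 1)))) = ε / 2 by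
    field_simp]
  linarith

end
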